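/- Let v be a valuation on a superring R. The v-convex prime ideals of A_v are exactly the prime ideals 𝔞 of A_v satisfying supp(v) ⊆ 𝔞 ⊆ 𝔭_v. -/

import Mathlib

universe u

/-- A superring: a `ZMod 2`-graded ring `R = R₀ ⊕ R₁` which is supercommutative
(`R₀` is central and every odd element squares to zero). -/
structure IsSuperring {R : Type*} [Ring R] (𝒜 : ZMod 2 → AddSubgroup R) : Prop where
  one_mem : (1 : R) ∈ 𝒜 0
  mul_mem : ∀ {i j : ZMod 2} {x y : R}, x ∈ 𝒜 i → y ∈ 𝒜 j → x * y ∈ 𝒜 (i + j)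
  decompose : ∀ x : R, ∃ x0 ∈ 𝒜 0, ∃ x1 ∈ 𝒜 1, x = x0 + x1
  unique_decomp : ∀ x0 ∈ 𝒜 0, ∀ x1 ∈ 𝒜 1, x0 + x1 = 0 → x0 = 0 ∧ x1 = 0
  even_central : ∀ x ∈ 𝒜 0, ∀ y : R, x * y = y * x
  odd_sq : ∀ x ∈ 𝒜 1, x * x = 0

/-- A (Manis) valuation on a ring `R`: a surjective map `v : R → Γ ∪ {∞}`
(`∞ = ⊤` is absorbing and greater than every element of the totally ordered
abelian group `Γ`) with `v 0 = ∞`, `v 1 = 0`, `v (x*y) = v x + v y` and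
`v (x+y) ≥ min (v x) (v y)`. -/
structure IsValuation {R : Type*} [Ring R] {Γ : Type*} [AddCommGroup Γ] [LinearOrder Γ] [IsOrderedAddMonoid Γ]
    (v : R → WithTop Γ) : Prop where
  surjective : Function.Surjective v
  map_zero : v 0 = ⊤
  map_one : v 1 = 0
  map_mul : ∀ x y : R, v (x * y) = v x + v y
  min_le_add : ∀ x y : R, min (v x) (v y) ≤ v (x + y)

/-- `A_v = {x : v x ≥ 0}`. -/
def valRing {R : Type*} [Ring R] {Γ : Type*} [AddCommGroup Γ] [LinearOrder Γ] [IsOrderedAddMonoid Γ]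
    (v : R → WithTop Γ) : Set R := {x : R | 0 ≤ v x}

/-- `𝔭_v = {x : v x > 0}`. -/
def valIdeal {R : Type*} [Ring R] {Γ : Type*} [AddCommGroup Γ] [LinearOrder Γ] [IsOrderedAddMonoid Γ]
    (v : R → WithTop Γ) : Set R := {x : R | 0 < v x}

/-- `supp v = v⁻¹(∞)`. -/
def valSupp {R : Type*} [Ring R] {Γ : Type*} [AddCommGroup Γ] [LinearOrder Γ] [IsOrderedAddMonoid Γ]
    (v : R → WithTop Γ) : Set R := {x : R | v x = ⊤}

/-- A prime ideal `p` of a subring `A` of `R`: an ideal of `A` such that `A/p` is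
an integral domain. -/
structure IsPrimeIdealOf {R : Type*} [Ring R] (A p : Set R) : Prop where
  subset : p ⊆ A
  zero_mem : (0 : R) ∈ p
  add_mem : ∀ {x y : R}, x ∈ p → y ∈ p → x + y ∈ p
  neg_mem : ∀ {x : R}, x ∈ p → -x ∈ p
  mul_mem_left : ∀ {a x : R}, a ∈ A → x ∈ p → a * x ∈ p
  mul_mem_right : ∀ {x a : R}, x ∈ p → a ∈ A → x * a ∈ p
  one_not_mem : (1 : R) ∉ p
  comm_mem : ∀ {x y : R}, x ∈ A → y ∈ A → x * y - y * x ∈ p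
  mem_or_mem : ∀ {x y : R}, x ∈ A → y ∈ A → x * y ∈ p → x ∈ p ∨ y ∈ p

/-- A `v`-convex ideal: `x ∈ I` and `v y ≥ v x` imply `y ∈ I`. -/
def IsVConvex {R : Type*} [Ring R] {Γ : Type*} [AddCommGroup Γ] [LinearOrder Γ] [IsOrderedAddMonoid Γ]
    (v : R → WithTop Γ) (I : Set R) : Prop :=
  ∀ x ∈ I, ∀ y : R, v x ≤ v y → y ∈ I

/-- The `v`-convex prime ideals of `A_v` are exactly the prime ideals `a` of `A_v`
with `supp v ⊆ a ⊆ 𝔭_v`. -/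
theorem vconvex_prime_iff_between_supp_and_center {R : Type u} [Ring R] [Nontrivial R]
    (𝒜 : ZMod 2 → AddSubgroup R) (hR : IsSuperring 𝒜)
    {Γ : Type*} [AddCommGroup Γ] [LinearOrder Γ] [IsOrderedAddMonoid Γ]
    (v : R → WithTop Γ) (hv : IsValuation v) :
    ∀ a : Set R, IsPrimeIdealOf (valRing v) a →
      (IsVConvex v a ↔ valSupp v ⊆ a ∧ a ⊆ valIdeal v) := by
  intro a ha
  -- Key fact: every commutator squares to zero, hence has valuation ⊤.
  have key : ∀ x y : R, v (x * y - y * x) = ⊤ := by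
    intro x y
    obtain ⟨x0, hx0, x1, hx1, hx⟩ := hR.decompose x
    obtain ⟨y0, hy0, y1, hy1, hy⟩ := hR.decompose y
    have h1 := hR.odd_sq x1 hx1
    have h2 := hR.odd_sq y1 hy1
    have hanti : x1 * y1 + y1 * x1 = 0 := by
      have hs := hR.odd_sq (x1 + y1) (AddSubgroup.add_mem _ hx1 hy1)
      have expand : (x1 + y1) * (x1 + y1) = x1 * x1 + (x1 * y1 + y1 * x1) + y1 * y1 := by
        noncomm_ring
      rw [expand, h1, h2] at hs
      simpa using hs
    have h3 : y1 * x1 = -(x1 * y1) := eq_neg_of_add_eq_zero_right hanti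
    have hc : x * y - y * x = x1 * y1 - y1 * x1 := by
      subst hx hy
      have e00 : x0 * y0 = y0 * x0 := hR.even_central x0 hx0 y0
      have e01 : x0 * y1 = y1 * x0 := hR.even_central x0 hx0 y1
      have e10 : x1 * y0 = y0 * x1 := (hR.even_central y0 hy0 x1).symm
      rw [add_mul, add_mul, mul_add, mul_add, mul_add, mul_add, e00, e01, e10]
      abel
    have hsq : (x1 * y1) * (x1 * y1) = 0 := by
      calc (x1 * y1) * (x1 * y1) = x1 * (y1 * x1) * y1 := by noncomm_ring
        _ = x1 * (-(x1 * y1)) * y1 := by rw [h3]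
        _ = -((x1 * x1) * (y1 * y1)) := by noncomm_ring
        _ = 0 := by rw [h1]; simp
    have hcc : (x * y - y * x) * (x * y - y * x) = 0 := by
      rw [hc, h3, sub_neg_eq_add, add_mul, mul_add, hsq]
      simp
    by_contra hne
    obtain ⟨γ, hγ⟩ := WithTop.ne_top_iff_exists.mp hne
    have := hv.map_mul (x * y - y * x) (x * y - y * x)
    rw [hcc, hv.map_zero, ← hγ, ← WithTop.coe_add] at this
    exact WithTop.coe_ne_top this.symm
  constructor
  · intro hconv
    constructor
    · intro x hx
      refine hconv 0 ha.zero_mem x ?_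
      rw [hv.map_zero]
      exact le_of_eq hx.symm
    · intro x hx
      have h0 : (0 : WithTop Γ) ≤ v x := ha.subset hx
      rcases lt_or_eq_of_le h0 with h | h
      · exact h
      · exfalso
        exact ha.one_not_mem (hconv x hx 1 (by rw [hv.map_one, ← h]))
  · rintro ⟨hs, hp⟩ x hx y hxy
    have hvx : (0 : WithTop Γ) < v x := hp hx
    by_cases hT : v x = ⊤
    · exact hs (top_le_iff.mp (hT ▸ hxy))
    · obtain ⟨γ, hγ⟩ := WithTop.ne_top_iff_exists.mp hT
      obtain ⟨z, hz⟩ := hv.surjective (↑(-γ) : WithTop Γ)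
      have hzx : v (z * x) = 0 := by
        rw [hv.map_mul, hz, ← hγ, ← WithTop.coe_add, neg_add_cancel]
        rfl
      have hzxA : z * x ∈ valRing v := le_of_eq hzx.symm
      have hzxna : z * x ∉ a := by
        intro h
        have h' : (0 : WithTop Γ) < v (z * x) := hp h
        rw [hzx] at h'
        exact lt_irrefl 0 h'
      have hyA : y ∈ valRing v := le_trans (le_of_lt hvx) hxy
      have hzyA : z * y ∈ valRing v := by
        show (0 : WithTop Γ) ≤ v (z * y)
        rw [hv.map_mul, hz]
        calc (0 : WithTop Γ) = ↑(-γ) + ↑γ := by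
              rw [← WithTop.coe_add, neg_add_cancel]; rfl
          _ = ↑(-γ) + v x := by rw [hγ]
          _ ≤ ↑(-γ) + v y := add_le_add_right hxy _
      have h1 : (z * y) * x ∈ a := ha.mul_mem_left hzyA hx
      have h2 : z * (x * y - y * x) ∈ a := by
        apply hs
        show v (z * (x * y - y * x)) = ⊤
        rw [hv.map_mul, key, add_top]
      have h3 : (z * x) * y ∈ a := by
        have heq : (z * x) * y = (z * y) * x + z * (x * y - y * x) := by noncomm_ring
        rw [heq]
        exact ha.add_mem h1 h2
      rcases ha.mem_or_mem hzxA hyA h3 with h | h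
      · exact absurd h hzxna
      · exact h
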